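/- Let Γ act without inversion on a tree 𝒯 and let e ∈ E(𝒯) be an edge such that the smallest subtree of 𝒯 containing all vertices of the orbit Γ·s(e) is all of 𝒯, and the same holds for Γ·r(e). If the quotient graph 𝒯/Γ with the edges (the images of) e and ē removed is still connected, then Γ is isomorphic to an HNN extension HNN(H, Σ, θ) over Σ = Stab(e), where H is the fundamental group of the graph of groups obtained by restricting to the complement of e, and θ : Σ → H is injective. -/

import Mathlib

namespace HNNDevissage

open SimpleGraph

variable {V Γ : Type*} [Group Γ] [MulAction Γ V]

/-- The pair `(x, y)` is in the orbit of the oriented edge `(a,b)` or `(b,a)`. -/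
def Bad (Γ : Type*) [Group Γ] [MulAction Γ V] (a b x y : V) : Prop :=
  ∃ δ : Γ, (x = δ • a ∧ y = δ • b) ∨ (x = δ • b ∧ y = δ • a)

theorem bad_symm {a b x y : V} (h : Bad Γ a b x y) : Bad Γ a b y x := by
  obtain ⟨δ, h | h⟩ := h
  · exact ⟨δ, Or.inr ⟨h.2, h.1⟩⟩
  · exact ⟨δ, Or.inl ⟨h.2, h.1⟩⟩

theorem bad_of_smul {a b x y : V} (γ : Γ) (h : Bad Γ a b (γ • x) (γ • y)) :
    Bad Γ a b x y := by
  obtain ⟨δ, ⟨h1, h2⟩ | ⟨h1, h2⟩⟩ := h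
  · exact ⟨γ⁻¹ * δ, Or.inl ⟨by rw [mul_smul, ← h1, inv_smul_smul],
      by rw [mul_smul, ← h2, inv_smul_smul]⟩⟩
  · exact ⟨γ⁻¹ * δ, Or.inr ⟨by rw [mul_smul, ← h1, inv_smul_smul],
      by rw [mul_smul, ← h2, inv_smul_smul]⟩⟩

variable (T : SimpleGraph V)

/-- `x` and `y` are connected by a walk avoiding the orbit of the edge `(a,b)`. -/
def Rel (Γ : Type*) [Group Γ] [MulAction Γ V] (a b x y : V) : Prop :=
  ∃ w : T.Walk x y, ∀ d ∈ w.darts, ¬ Bad Γ a b d.toProd.1 d.toProd.2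

/-- `x` is on the `u`-side of the edge `{u, v}` : it is reachable from `u`
by a walk avoiding that edge. -/
def Sd (u v x : V) : Prop :=
  ∃ w : T.Walk u x, ∀ d ∈ w.darts,
    ¬(d.toProd.1 = u ∧ d.toProd.2 = v) ∧ ¬(d.toProd.1 = v ∧ d.toProd.2 = u)

variable {T}

theorem rel_refl (a b x : V) : Rel T Γ a b x x :=
  ⟨.nil, by simp⟩

theorem rel_symm {a b x y : V} (h : Rel T Γ a b x y) : Rel T Γ a b y x := by
  obtain ⟨w, hw⟩ := h
  refine ⟨w.reverse, fun d hd => ?_⟩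
  rw [SimpleGraph.Walk.mem_darts_reverse] at hd
  intro hbad
  exact hw d.symm hd (bad_symm hbad)

theorem rel_trans {a b x y z : V} (h1 : Rel T Γ a b x y) (h2 : Rel T Γ a b y z) :
    Rel T Γ a b x z := by
  obtain ⟨w1, hw1⟩ := h1
  obtain ⟨w2, hw2⟩ := h2
  refine ⟨w1.append w2, fun d hd => ?_⟩
  rw [SimpleGraph.Walk.darts_append, List.mem_append] at hd
  exact hd.elim (hw1 d) (hw2 d)

/-- Push a walk forward along the action of `γ`. -/
theorem walk_smul (hact : ∀ (γ : Γ) (u v : V), T.Adj u v → T.Adj (γ • u) (γ • v))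
    (γ : Γ) {x y : V} (w : T.Walk x y) :
    ∃ w' : T.Walk (γ • x) (γ • y), ∀ d' ∈ w'.darts, ∃ d ∈ w.darts,
      d'.toProd.1 = γ • d.toProd.1 ∧ d'.toProd.2 = γ • d.toProd.2 := by
  induction w with
  | nil => exact ⟨.nil, by simp⟩
  | cons h p ih =>
    obtain ⟨w', hw'⟩ := ih
    refine ⟨SimpleGraph.Walk.cons (hact γ _ _ h) w', fun d' hd' => ?_⟩
    rw [SimpleGraph.Walk.darts_cons, List.mem_cons] at hd'
    rcases hd' with rfl | hd'
    · exact ⟨⟨(_, _), h⟩, by simp, rfl, rfl⟩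
    · obtain ⟨d, hd, h1, h2⟩ := hw' d' hd'
      exact ⟨d, by simp [hd], h1, h2⟩

theorem rel_smul (hact : ∀ (γ : Γ) (u v : V), T.Adj u v → T.Adj (γ • u) (γ • v))
    (γ : Γ) {a b x y : V} (h : Rel T Γ a b x y) : Rel T Γ a b (γ • x) (γ • y) := by
  obtain ⟨w, hw⟩ := h
  obtain ⟨w', hw'⟩ := walk_smul hact γ w
  refine ⟨w', fun d' hd' hbad => ?_⟩
  obtain ⟨d, hd, h1, h2⟩ := hw' d' hd'
  rw [h1, h2] at hbad
  exact hw d hd (bad_of_smul γ hbad)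

theorem sd_refl (u v : V) : Sd T u v u := ⟨.nil, by simp⟩

theorem sd_step {u v x y : V} (hadj : T.Adj x y)
    (h1 : ¬(x = u ∧ y = v)) (h2 : ¬(x = v ∧ y = u)) (hx : Sd T u v x) :
    Sd T u v y := by
  obtain ⟨w, hw⟩ := hx
  refine ⟨w.append (SimpleGraph.Walk.cons hadj .nil), fun d hd => ?_⟩
  rw [SimpleGraph.Walk.darts_append, List.mem_append] at hd
  rcases hd with hd | hd
  · exact hw d hd
  · simp only [SimpleGraph.Walk.darts_cons, SimpleGraph.Walk.darts_nil,
      List.mem_cons, List.not_mem_nil, or_false] at hd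
    subst hd
    exact ⟨h1, h2⟩

theorem sd_smul (hact : ∀ (γ : Γ) (u v : V), T.Adj u v → T.Adj (γ • u) (γ • v))
    (γ : Γ) {u v x : V} (h : Sd T u v x) : Sd T (γ • u) (γ • v) (γ • x) := by
  obtain ⟨w, hw⟩ := h
  obtain ⟨w', hw'⟩ := walk_smul hact γ w
  refine ⟨w', fun d' hd' => ?_⟩
  obtain ⟨d, hd, h1, h2⟩ := hw' d' hd'
  refine ⟨fun hc => (hw d hd).1 ?_, fun hc => (hw d hd).2 ?_⟩
  · exact ⟨smul_left_cancel γ (h1 ▸ hc.1), smul_left_cancel γ (h2 ▸ hc.2)⟩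
  · exact ⟨smul_left_cancel γ (h1 ▸ hc.1), smul_left_cancel γ (h2 ▸ hc.2)⟩

/-- Walks avoiding the edge orbit preserve sides of orbit edges. -/
theorem sd_of_rel {a b u v x y : V} (hbad : Bad Γ a b u v)
    (hrel : Rel T Γ a b x y) (hx : Sd T u v x) : Sd T u v y := by
  obtain ⟨w1, hw1⟩ := hx
  obtain ⟨w2, hw2⟩ := hrel
  refine ⟨w1.append w2, fun d hd => ?_⟩
  rw [SimpleGraph.Walk.darts_append, List.mem_append] at hd
  rcases hd with hd | hd
  · exact hw1 d hd
  · constructor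
    · rintro ⟨h1, h2⟩
      exact hw2 d hd (h1 ▸ h2 ▸ hbad)
    · rintro ⟨h1, h2⟩
      exact hw2 d hd (h1 ▸ h2 ▸ bad_symm hbad)

/-- In a tree, the two sides of an edge are disjoint. -/
theorem sd_disjoint (hT : T.IsTree) {u v x : V} (hadj : T.Adj u v)
    (h1 : Sd T u v x) (h2 : Sd T v u x) : False := by
  obtain ⟨w1, hw1⟩ := h1
  obtain ⟨w2, hw2⟩ := h2
  have hbridge : T.IsBridge s(u, v) :=
    SimpleGraph.isAcyclic_iff_forall_adj_isBridge.mp hT.IsAcyclic hadj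
  refine hbridge (SimpleGraph.reachable_delete_edges_iff_exists_walk.mpr
    ⟨w1.append w2.reverse, fun he => ?_⟩)
  rw [SimpleGraph.Walk.edges_append, List.mem_append] at he
  rcases he with he | he
  · obtain ⟨d, hd, hde⟩ := List.mem_map.mp he
    have : s(d.toProd.1, d.toProd.2) = s(u, v) := hde
    rw [Sym2.eq_iff] at this
    rcases this with ⟨h1', h2'⟩ | ⟨h1', h2'⟩
    · exact (hw1 d hd).1 ⟨h1', h2'⟩
    · exact (hw1 d hd).2 ⟨h1', h2'⟩
  · rw [SimpleGraph.Walk.edges_reverse, List.mem_reverse] at he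
    obtain ⟨d, hd, hde⟩ := List.mem_map.mp he
    have : s(d.toProd.1, d.toProd.2) = s(u, v) := hde
    rw [Sym2.eq_iff] at this
    rcases this with ⟨h1', h2'⟩ | ⟨h1', h2'⟩
    · exact (hw2 d hd).2 ⟨h1', h2'⟩
    · exact (hw2 d hd).1 ⟨h1', h2'⟩

/-- Key nesting lemma for sides of edges in a tree. -/
theorem lemN (hT : T.IsTree) {a' b' u v x : V} (hf : T.Adj u v)
    (h1 : Sd T a' b' u) (h2 : Sd T v u a') (h3 : Sd T u v x) : Sd T a' b' x := by
  classical
  obtain ⟨q, hq⟩ := h3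
  by_cases hc : ∀ d ∈ q.darts,
      ¬(d.toProd.1 = a' ∧ d.toProd.2 = b') ∧ ¬(d.toProd.1 = b' ∧ d.toProd.2 = a')
  · obtain ⟨w1, hw1⟩ := h1
    refine ⟨w1.append q, fun d hd => ?_⟩
    rw [SimpleGraph.Walk.darts_append, List.mem_append] at hd
    exact hd.elim (hw1 d) (hc d)
  · simp only [not_forall] at hc
    obtain ⟨d, hd, hnot⟩ := hc
    have hor : (d.toProd.1 = a' ∧ d.toProd.2 = b') ∨
        (d.toProd.1 = b' ∧ d.toProd.2 = a') := by
      rcases not_and_or.mp hnot with h | h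
      · exact Or.inl (not_not.mp h)
      · exact Or.inr (not_not.mp h)
    have ha' : a' ∈ q.support := by
      rcases hor with h | h
      · exact h.1 ▸ q.dart_fst_mem_support_of_mem_darts hd
      · exact h.2 ▸ q.dart_snd_mem_support_of_mem_darts hd
    exfalso
    refine sd_disjoint hT hf ⟨q.takeUntil a' ha', fun d' hd' => ?_⟩ h2
    exact hq d' (q.darts_takeUntil_subset ha' hd')

/-! ### Britton's lemma, proved by ping-pong on the tree -/

/-- The pinch condition: `g` conjugated appropriately lies in the edge stabilizer. -/
def Pinch (a b : V) (τ : Γ) (u : ℤˣ) (g : Γ) : Prop :=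
  if u = 1 then g • a = a ∧ g • b = b
  else ∃ σ : Γ, (σ • a = a ∧ σ • b = b) ∧ g = τ * σ * τ⁻¹

theorem pinch_one {a b : V} {τ : Γ} {g : Γ} :
    Pinch a b τ 1 g ↔ (g • a = a ∧ g • b = b) := by simp [Pinch]

theorem pinch_neg {a b : V} {τ : Γ} {g : Γ} :
    Pinch a b τ (-1) g ↔ ∃ σ : Γ, (σ • a = a ∧ σ • b = b) ∧ g = τ * σ * τ⁻¹ := by
  rw [Pinch, if_neg (by decide)]

/-- The element of `Γ` represented by a word. -/
def elt (τ : Γ) (H : Subgroup Γ) (h₀ : H) (l : List (ℤˣ × H)) : Γ :=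
  (h₀ : Γ) * (l.map (fun p => τ ^ (p.1 : ℤ) * (p.2 : Γ))).prod

@[simp] theorem elt_nil (τ : Γ) (H : Subgroup Γ) (h₀ : H) : elt τ H h₀ [] = (h₀ : Γ) := by
  simp [elt]

theorem elt_cons (τ : Γ) (H : Subgroup Γ) (h₀ h : H) (u : ℤˣ) (l : List (ℤˣ × H)) :
    elt τ H h₀ ((u, h) :: l) = (h₀ : Γ) * (τ ^ (u : ℤ) * elt τ H h l) := by
  simp [elt, mul_assoc]

theorem britton_core
    (hT : T.IsTree)
    (hact : ∀ (γ : Γ) (u v : V), T.Adj u v → T.Adj (γ • u) (γ • v))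
    (hnoinv : ∀ (γ : Γ) (u v : V), T.Adj u v → ¬(γ • u = v ∧ γ • v = u))
    {a b : V} (hab : T.Adj a b) {τ : Γ}
    (H : Subgroup Γ) (hH : ∀ γ : Γ, γ ∈ H ↔ Rel T Γ a b (γ • a) a)
    (hτ : Rel T Γ a b a (τ • b)) :
    ∀ (l : List (ℤˣ × H)) (u : ℤˣ) (h₁ h₀ : H),
      List.Chain' (fun p q => Pinch a b τ p.1 (p.2 : Γ) → p.1 = q.1) ((u, h₁) :: l) →
      if u = 1 then
        Sd T ((h₀ : Γ) • τ • b) ((h₀ : Γ) • τ • a) a ∧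
        Sd T ((h₀ : Γ) • τ • a) ((h₀ : Γ) • τ • b) ((h₀ : Γ) • τ • elt τ H h₁ l • a)
      else
        Sd T ((h₀ : Γ) • a) ((h₀ : Γ) • b) a ∧
        Sd T ((h₀ : Γ) • b) ((h₀ : Γ) • a) ((h₀ : Γ) • τ⁻¹ • elt τ H h₁ l • a) := by
  have badAB : ∀ γ : Γ, Bad Γ a b (γ • a) (γ • b) := fun γ => ⟨γ, Or.inl ⟨rfl, rfl⟩⟩
  have badBA : ∀ γ : Γ, Bad Γ a b (γ • b) (γ • a) := fun γ => ⟨γ, Or.inr ⟨rfl, rfl⟩⟩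
  have badAB2 : ∀ γ δ : Γ, Bad Γ a b (γ • δ • a) (γ • δ • b) := fun γ δ =>
    ⟨γ * δ, Or.inl ⟨(mul_smul γ δ a).symm, (mul_smul γ δ b).symm⟩⟩
  have badBA2 : ∀ γ δ : Γ, Bad Γ a b (γ • δ • b) (γ • δ • a) := fun γ δ =>
    ⟨γ * δ, Or.inr ⟨(mul_smul γ δ b).symm, (mul_smul γ δ a).symm⟩⟩
  have relH : ∀ h : H, Rel T Γ a b ((h : Γ) • a) a := fun h => (hH _).mp h.2
  have relH' : ∀ h : H, Rel T Γ a b a ((h : Γ) • a) := fun h => rel_symm (relH h)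
  have relτb : Rel T Γ a b (τ • b) a := rel_symm hτ
  have relbH : ∀ h : H, Rel T Γ a b ((h : Γ) • τ • b) a := fun h =>
    rel_trans (rel_symm (rel_smul hact (h : Γ) hτ)) (relH h)
  have nRab : ¬ Rel T Γ a b a b := fun hr =>
    sd_disjoint hT hab
      (sd_of_rel (show Bad Γ a b a b from
        ⟨1, Or.inl ⟨(one_smul Γ a).symm, (one_smul Γ b).symm⟩⟩) hr
        (sd_refl (T := T) a b)) (sd_refl (T := T) b a)
  -- goal (i) for `u = 1`:
  have goal1 : ∀ h₀ : H, Sd T ((h₀ : Γ) • τ • b) ((h₀ : Γ) • τ • a) a := fun h₀ =>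
    sd_of_rel (badBA2 (h₀ : Γ) τ)
      (relbH h₀) (sd_refl (T := T) _ _)
  -- goal (i) for `u = -1`:
  have goal2 : ∀ h₀ : H, Sd T ((h₀ : Γ) • a) ((h₀ : Γ) • b) a := fun h₀ =>
    sd_of_rel (badAB (h₀ : Γ)) (relH h₀) (sd_refl (T := T) _ _)
  intro l
  induction l with
  | nil =>
    intro u h₁ h₀ _hchain
    rcases Int.units_eq_one_or u with rfl | rfl
    · rw [if_pos rfl]
      refine ⟨goal1 h₀, ?_⟩
      rw [elt_nil]
      refine sd_of_rel (badAB2 (h₀ : Γ) τ)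
        ?_ (sd_refl (T := T) _ _)
      exact rel_smul hact (h₀ : Γ) (rel_smul hact τ (relH' h₁))
    · rw [if_neg (by decide)]
      refine ⟨goal2 h₀, ?_⟩
      rw [elt_nil]
      refine sd_of_rel (badBA (h₀ : Γ)) ?_ (sd_refl (T := T) _ _)
      have h1 : Rel T Γ a b b (τ⁻¹ • a) := by
        have := rel_smul hact τ⁻¹ hτ
        rw [inv_smul_smul] at this
        exact rel_symm this
      have h2 : Rel T Γ a b (τ⁻¹ • a) (τ⁻¹ • (h₁ : Γ) • a) :=
        rel_smul hact τ⁻¹ (relH' h₁)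
      exact rel_smul hact (h₀ : Γ) (rel_trans h1 h2)
  | cons p l'' ih =>
    obtain ⟨u₂, h₂⟩ := p
    intro u h₁ h₀ hchain
    have hchain' := hchain.tail
    have hR : Pinch a b τ u (h₁ : Γ) → u = u₂ := (List.isChain_cons_cons.mp hchain).1
    have IH := ih u₂ h₂ h₁ hchain'
    -- `y` via tail element
    set y : V := elt τ H h₂ l'' • a with hy
    -- rewrite `elt` of the word starting at h₁
    have helt : ∀ x : V, elt τ H h₁ ((u₂, h₂) :: l'') • x
        = (h₁ : Γ) • τ ^ (u₂ : ℤ) • elt τ H h₂ l'' • x := by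
      intro x
      rw [elt_cons, mul_smul, mul_smul]
    rcases Int.units_eq_one_or u with rfl | rfl
    · -- `u = 1`; we must show `Sd T a b ((h₁:Γ) • τ^(u₂) • y)`
      rw [if_pos rfl]
      refine ⟨goal1 h₀, ?_⟩
      have claim : Sd T a b (elt τ H h₁ ((u₂, h₂) :: l'') • a) := by
        rcases Int.units_eq_one_or u₂ with rfl | rfl
        · rw [if_pos rfl] at IH
          obtain ⟨i', ii'⟩ := IH
          rw [helt]
          simp only [Units.val_one, zpow_one]
          have step1 : Sd T a b ((h₁ : Γ) • τ • b) :=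
            sd_of_rel (show Bad Γ a b a b from
              ⟨1, Or.inl ⟨(one_smul Γ a).symm, (one_smul Γ b).symm⟩⟩)
              (rel_symm (relbH h₁)) (sd_refl (T := T) a b)
          have step2 : Sd T a b ((h₁ : Γ) • τ • a) := by
            refine sd_step (hact _ _ _ (hact τ _ _ hab.symm)) ?_ ?_ step1
            · rintro ⟨hc1, hc2⟩
              exact hnoinv ((h₁ : Γ) * τ) a b hab
                ⟨by rw [mul_smul]; exact hc2, by rw [mul_smul]; exact hc1⟩
            · rintro ⟨hc1, hc2⟩
              have hrb := relbH h₁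
              rw [hc1] at hrb
              exact nRab (rel_symm hrb)
          exact lemN hT (hact _ _ _ (hact τ _ _ hab)) step2 i' ii'
        · rw [if_neg (by decide)] at IH
          obtain ⟨i', ii'⟩ := IH
          rw [helt]
          simp only [Units.val_neg, Units.val_one, zpow_neg, zpow_one]
          have hnp : ¬((h₁ : Γ) • a = a ∧ (h₁ : Γ) • b = b) := by
            intro hp
            have : (1 : ℤˣ) = -1 := hR (pinch_one.mpr hp)
            exact absurd this (by decide)
          have step1 : Sd T a b ((h₁ : Γ) • a) :=
            sd_of_rel (show Bad Γ a b a b from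
              ⟨1, Or.inl ⟨(one_smul Γ a).symm, (one_smul Γ b).symm⟩⟩)
              (relH' h₁) (sd_refl (T := T) a b)
          have step2 : Sd T a b ((h₁ : Γ) • b) := by
            refine sd_step (hact _ _ _ hab) ?_ ?_ step1
            · exact hnp
            · exact hnoinv (h₁ : Γ) a b hab
          exact lemN hT (hact _ _ _ hab.symm) step2 i' ii'
      have := sd_smul hact (h₀ : Γ) (sd_smul hact τ claim)
      exact this
    · -- `u = -1`; we must show `Sd T (τ•b) (τ•a) ((h₁:Γ) • τ^(u₂) • y)`
      rw [if_neg (by decide)]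
      refine ⟨goal2 h₀, ?_⟩
      have claim : Sd T (τ • b) (τ • a) (elt τ H h₁ ((u₂, h₂) :: l'') • a) := by
        rcases Int.units_eq_one_or u₂ with rfl | rfl
        · rw [if_pos rfl] at IH
          obtain ⟨i', ii'⟩ := IH
          rw [helt]
          simp only [Units.val_one, zpow_one]
          have hnp : ¬∃ σ : Γ, (σ • a = a ∧ σ • b = b) ∧ (h₁ : Γ) = τ * σ * τ⁻¹ := by
            intro hp
            have : (-1 : ℤˣ) = 1 := hR (pinch_neg.mpr hp)
            exact absurd this (by decide)
          have step1 : Sd T (τ • b) (τ • a) ((h₁ : Γ) • τ • b) :=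
            sd_of_rel (badBA τ)
              (rel_trans relτb (rel_symm (relbH h₁))) (sd_refl (T := T) _ _)
          have step2 : Sd T (τ • b) (τ • a) ((h₁ : Γ) • τ • a) := by
            refine sd_step (hact _ _ _ (hact τ _ _ hab.symm)) ?_ ?_ step1
            · rintro ⟨hc1, hc2⟩
              refine hnp ⟨τ⁻¹ * (h₁ : Γ) * τ, ⟨?_, ?_⟩, by group⟩
              · rw [mul_smul, mul_smul, hc2, inv_smul_smul]
              · rw [mul_smul, mul_smul, hc1, inv_smul_smul]
            · rintro ⟨hc1, hc2⟩
              refine hnoinv (τ⁻¹ * (h₁ : Γ) * τ) a b hab ⟨?_, ?_⟩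
              · rw [mul_smul, mul_smul, hc2, inv_smul_smul]
              · rw [mul_smul, mul_smul, hc1, inv_smul_smul]
          refine lemN hT (hact _ _ _ (hact τ _ _ hab)) step2 ?_ ii'
          exact sd_of_rel (badBA2 (h₁ : Γ) τ)
            hτ i'
        · rw [if_neg (by decide)] at IH
          obtain ⟨i', ii'⟩ := IH
          rw [helt]
          simp only [Units.val_neg, Units.val_one, zpow_neg, zpow_one]
          have step1 : Sd T (τ • b) (τ • a) ((h₁ : Γ) • a) :=
            sd_of_rel (badBA τ)
              (rel_trans relτb (relH' h₁)) (sd_refl (T := T) _ _)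
          have step2 : Sd T (τ • b) (τ • a) ((h₁ : Γ) • b) := by
            refine sd_step (hact _ _ _ hab) ?_ ?_ step1
            · rintro ⟨hc1, hc2⟩
              refine hnoinv (τ⁻¹ * (h₁ : Γ)) a b hab ⟨?_, ?_⟩
              · rw [mul_smul, hc1, inv_smul_smul]
              · rw [mul_smul, hc2, inv_smul_smul]
            · rintro ⟨hc1, hc2⟩
              have h1 : Rel T Γ a b (τ • a) (τ • b) := by
                refine rel_trans (rel_symm ?_) hτ
                rw [← hc1]; exact relH' h₁
              have := rel_smul hact τ⁻¹ h1
              rw [inv_smul_smul, inv_smul_smul] at this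
              exact nRab this
          refine lemN hT (hact _ _ _ hab.symm) step2 ?_ ii'
          exact sd_of_rel (badAB (h₁ : Γ)) hτ i'
      have := sd_smul hact (h₀ : Γ) (sd_smul hact τ⁻¹ claim)
      rw [inv_smul_smul, inv_smul_smul] at this
      exact this

end HNNDevissage

open HNNDevissage in
set_option maxHeartbeats 2000000 in
/-- **Dévissage, HNN case.**  Let `Γ` act (by automorphisms, without inversion) on a
tree `T`, and let `e` be an edge with endpoints `a, b` such that the smallest subtree
containing the orbit `Γ·a` is all of `T` (every vertex lies on a path between two
points of `Γ·a`), and similarly for `Γ·b`.  If the quotient graph `T/Γ` minus the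
edges `e, ē` is still connected (any two vertices of `T` are joined, up to translating
the second by `Γ`, by a path avoiding the orbit of the edge `e`), then `Γ` is
isomorphic to an HNN extension `HNN(H, Σ, θ)` over `Σ = Stab(e)`: there are a subgroup
`H ≤ Γ` (the fundamental group of the graph of groups restricted to the complement of
`e`), subgroups `A, B ≤ H` with an isomorphism `φ : A ≃* B` (the injective `θ`), and an
isomorphism `ψ : HNNExtension H A B φ ≃* Γ` restricting to the identity on `H`, with
`A` equal, as a subgroup of `Γ`, to the stabilizer `Stab(e)` (the action being without
inversion, `Stab(e)` consists of the `γ` fixing both endpoints `a` and `b`). -/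
theorem hnn_decomposition_of_quotient_minus_edge_connected
    {V Γ : Type*} [Group Γ] [MulAction Γ V]
    (T : SimpleGraph V) (hT : T.IsTree)
    (hact : ∀ (γ : Γ) (u v : V), T.Adj u v → T.Adj (γ • u) (γ • v))
    (hnoinv : ∀ (γ : Γ) (u v : V), T.Adj u v → ¬(γ • u = v ∧ γ • v = u))
    (a b : V) (hab : T.Adj a b)
    (hspan_a : ∀ x : V, ∃ (γ₁ γ₂ : Γ) (w : T.Walk (γ₁ • a) (γ₂ • a)),
      w.IsPath ∧ x ∈ w.support)
    (hspan_b : ∀ x : V, ∃ (γ₁ γ₂ : Γ) (w : T.Walk (γ₁ • b) (γ₂ • b)),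
      w.IsPath ∧ x ∈ w.support)
    (hconn : ∀ u v : V, ∃ (γ : Γ) (w : T.Walk u (γ • v)),
      ∀ d ∈ w.darts, ¬ ∃ δ : Γ,
        (d.toProd.1 = δ • a ∧ d.toProd.2 = δ • b) ∨
        (d.toProd.1 = δ • b ∧ d.toProd.2 = δ • a)) :
    ∃ (H : Subgroup Γ) (A B : Subgroup H) (φ : A ≃* B)
      (ψ : HNNExtension H A B φ ≃* Γ),
      (∀ x : H, ψ (HNNExtension.of x) = (x : Γ)) ∧
      Subgroup.map H.subtype A =
        MulAction.stabilizer Γ a ⊓ MulAction.stabilizer Γ b := by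
  classical
  obtain ⟨τ, wτ, hwτ⟩ := hconn a b
  have hτ : Rel T Γ a b a (τ • b) := ⟨wτ, hwτ⟩
  -- the vertex group
  let H : Subgroup Γ :=
  { carrier := {γ : Γ | Rel T Γ a b (γ • a) a}
    one_mem' := by
      simp only [Set.mem_setOf_eq, one_smul]
      exact rel_refl a b a
    mul_mem' := by
      intro γ δ hγ hδ
      simp only [Set.mem_setOf_eq] at *
      rw [mul_smul]
      exact rel_trans (rel_smul hact γ hδ) hγ
    inv_mem' := by
      intro γ hγ
      simp only [Set.mem_setOf_eq] at *
      have := rel_smul hact γ⁻¹ (rel_symm hγ)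
      rwa [inv_smul_smul] at this }
  have hH : ∀ γ : Γ, γ ∈ H ↔ Rel T Γ a b (γ • a) a := fun γ => Iff.rfl
  have relτb : Rel T Γ a b (τ • b) a := rel_symm hτ
  -- the edge stabilizer
  set Sg0 : Subgroup Γ := MulAction.stabilizer Γ a ⊓ MulAction.stabilizer Γ b with hSg0
  have hmemSg : ∀ g : Γ, g ∈ Sg0 ↔ (g • a = a ∧ g • b = b) := fun g => by
    rw [hSg0, Subgroup.mem_inf, MulAction.mem_stabilizer_iff, MulAction.mem_stabilizer_iff]
  have hSgH : ∀ g ∈ Sg0, g ∈ H := by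
    intro g hg
    rw [hH, ((hmemSg g).mp hg).1]
    exact rel_refl a b a
  have hBH : ∀ g ∈ Sg0, τ * g * τ⁻¹ ∈ H := by
    intro g hg
    obtain ⟨hga, hgb⟩ := (hmemSg g).mp hg
    rw [hH]
    have h1 : Rel T Γ a b ((τ * g * τ⁻¹) • a) ((τ * g * τ⁻¹) • τ • b) :=
      rel_smul hact _ hτ
    have h2 : (τ * g * τ⁻¹) • τ • b = τ • b := by
      rw [smul_smul, show τ * g * τ⁻¹ * τ = τ * g by group, mul_smul, hgb]
    rw [h2] at h1
    exact rel_trans h1 relτb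
  let A : Subgroup H := Sg0.subgroupOf H
  let B : Subgroup H := (Sg0.map (MulAut.conj τ).toMonoidHom).subgroupOf H
  have hmemB : ∀ x : H, x ∈ B ↔
      ∃ σ : Γ, (σ • a = a ∧ σ • b = b) ∧ (x : Γ) = τ * σ * τ⁻¹ := by
    intro x
    rw [Subgroup.mem_subgroupOf, Subgroup.mem_map]
    constructor
    · rintro ⟨σ, hσ, heq⟩
      exact ⟨σ, (hmemSg σ).mp hσ, by rw [← heq]; simp [MulAut.conj_apply]⟩
    · rintro ⟨σ, hσ, heq⟩
      exact ⟨σ, (hmemSg σ).mpr hσ, by rw [heq]; simp [MulAut.conj_apply]⟩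
  have hconjmemH : ∀ x : A, τ * ((x : H) : Γ) * τ⁻¹ ∈ H := fun x =>
    hBH _ (Subgroup.mem_subgroupOf.mp x.2)
  have hconjmemB : ∀ x : A, (⟨τ * ((x : H) : Γ) * τ⁻¹, hconjmemH x⟩ : H) ∈ B := fun x =>
    (hmemB _).mpr ⟨((x : H) : Γ), (hmemSg _).mp (Subgroup.mem_subgroupOf.mp x.2), rfl⟩
  have hinvmemSg : ∀ y : B, τ⁻¹ * ((y : H) : Γ) * τ ∈ Sg0 := by
    intro y
    obtain ⟨σ, hσ, heq⟩ := (hmemB _).mp y.2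
    rw [heq, show τ⁻¹ * (τ * σ * τ⁻¹) * τ = σ by group]
    exact (hmemSg σ).mpr hσ
  have hinvmemA : ∀ y : B, (⟨τ⁻¹ * ((y : H) : Γ) * τ, hSgH _ (hinvmemSg y)⟩ : H) ∈ A :=
    fun y => Subgroup.mem_subgroupOf.mpr (hinvmemSg y)
  let φ : A ≃* B :=
  { toFun := fun x => ⟨⟨τ * ((x : H) : Γ) * τ⁻¹, hconjmemH x⟩, hconjmemB x⟩
    invFun := fun y => ⟨⟨τ⁻¹ * ((y : H) : Γ) * τ, hSgH _ (hinvmemSg y)⟩, hinvmemA y⟩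
    left_inv := fun x => by
      refine Subtype.ext (Subtype.ext ?_)
      show τ⁻¹ * (τ * ((x : H) : Γ) * τ⁻¹) * τ = _
      group
    right_inv := fun y => by
      refine Subtype.ext (Subtype.ext ?_)
      show τ * (τ⁻¹ * ((y : H) : Γ) * τ) * τ⁻¹ = _
      group
    map_mul' := fun x y => by
      refine Subtype.ext (Subtype.ext ?_)
      show τ * (((x : H) : Γ) * ((y : H) : Γ)) * τ⁻¹
        = (τ * ((x : H) : Γ) * τ⁻¹) * (τ * ((y : H) : Γ) * τ⁻¹)
      group }
  have hcompat : ∀ x : A, τ * H.subtype ↑x = H.subtype ↑(φ x) * τ := by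
    intro x
    show τ * ((x : H) : Γ) = (τ * ((x : H) : Γ) * τ⁻¹) * τ
    group
  let ψ₀ : HNNExtension H A B φ →* Γ := HNNExtension.lift H.subtype τ hcompat
  have hψt : ψ₀ HNNExtension.t = τ := HNNExtension.lift_t _ _ _
  have hψof : ∀ h : H, ψ₀ (HNNExtension.of h) = (h : Γ) := fun h =>
    HNNExtension.lift_of _ _ _ h
  -- ψ₀ on words
  have hψprod : ∀ (h₀ : H) (l : List (ℤˣ × H)),
      ψ₀ (HNNExtension.of h₀ *
        (l.map (fun x => HNNExtension.t ^ (x.1 : ℤ) * HNNExtension.of x.2)).prod)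
        = elt τ H h₀ l := by
    intro h₀ l
    have hel : ∀ p : ℤˣ × H,
        ψ₀ (HNNExtension.t ^ (p.1 : ℤ) * HNNExtension.of p.2)
          = τ ^ (p.1 : ℤ) * (p.2 : Γ) := by
      intro p
      rw [map_mul, map_zpow, hψt, hψof]
    rw [map_mul, hψof, map_list_prod, List.map_map]
    unfold elt
    congr 1
    exact congrArg List.prod (List.map_congr_left fun p _ => hel p)
  -- surjectivity
  have htK : τ ∈ ψ₀.range := ⟨HNNExtension.t, hψt⟩
  have hHK : ∀ h : H, (h : Γ) ∈ ψ₀.range := fun h => ⟨HNNExtension.of h, hψof h⟩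
  have hrelinv : ∀ δ : Γ, Rel T Γ a b ((δ * τ⁻¹) • a) (δ • b) := by
    intro δ
    have h1 := rel_smul hact (δ * τ⁻¹) hτ
    rwa [smul_smul, show δ * τ⁻¹ * τ = δ by group] at h1
  have step : ∀ {x m : V}, T.Adj x m →
      (∃ γ' ∈ ψ₀.range, Rel T Γ a b x (γ' • a)) →
      ∃ γ' ∈ ψ₀.range, Rel T Γ a b m (γ' • a) := by
    rintro x m hadj ⟨γ', hγ'K, hrel⟩
    by_cases hbad : Bad Γ a b x m
    · obtain ⟨δ, ⟨hx, hm⟩ | ⟨hx, hm⟩⟩ := hbad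
      · subst hx; subst hm
        have hδ : γ'⁻¹ * δ ∈ H := by
          rw [hH]
          have := rel_smul hact γ'⁻¹ hrel
          rwa [inv_smul_smul, ← mul_smul] at this
        have hδK : δ ∈ ψ₀.range := by
          have := mul_mem hγ'K (hHK ⟨γ'⁻¹ * δ, hδ⟩)
          rwa [show γ' * ((⟨γ'⁻¹ * δ, hδ⟩ : H) : Γ) = δ by show γ' * (γ'⁻¹ * δ) = δ; group]
            at this
        exact ⟨δ * τ⁻¹, mul_mem hδK (inv_mem htK), rel_symm (hrelinv δ)⟩
      · subst hx; subst hm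
        have h2 : Rel T Γ a b ((δ * τ⁻¹) • a) (γ' • a) := rel_trans (hrelinv δ) hrel
        have hδ' : γ'⁻¹ * (δ * τ⁻¹) ∈ H := by
          rw [hH]
          have := rel_smul hact γ'⁻¹ h2
          rwa [inv_smul_smul, ← mul_smul] at this
        have hδτK : δ * τ⁻¹ ∈ ψ₀.range := by
          have := mul_mem hγ'K (hHK ⟨γ'⁻¹ * (δ * τ⁻¹), hδ'⟩)
          rwa [show γ' * ((⟨γ'⁻¹ * (δ * τ⁻¹), hδ'⟩ : H) : Γ) = δ * τ⁻¹ by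
            show γ' * (γ'⁻¹ * (δ * τ⁻¹)) = δ * τ⁻¹; group] at this
        have hδK : δ ∈ ψ₀.range := by
          have := mul_mem hδτK htK
          rwa [show δ * τ⁻¹ * τ = δ by group] at this
        exact ⟨δ, hδK, rel_refl a b (δ • a)⟩
    · refine ⟨γ', hγ'K, rel_trans ?_ hrel⟩
      refine ⟨SimpleGraph.Walk.cons hadj.symm .nil, ?_⟩
      intro d hd
      simp only [SimpleGraph.Walk.darts_cons, SimpleGraph.Walk.darts_nil, List.mem_cons,
        List.not_mem_nil, or_false] at hd
      subst hd
      exact fun hb => hbad (bad_symm hb)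
  have hsurj : Function.Surjective ψ₀ := by
    intro γ
    have key : ∀ {x y : V} (w : T.Walk x y),
        (∃ γ' ∈ ψ₀.range, Rel T Γ a b x (γ' • a)) →
        ∃ γ' ∈ ψ₀.range, Rel T Γ a b y (γ' • a) := by
      intro x y w
      induction w with
      | nil => exact id
      | cons hadj p ihp => exact fun hx => ihp (step hadj hx)
    obtain ⟨wγ⟩ := hT.isConnected.preconnected a (γ • a)
    obtain ⟨γ', hγ'K, hrel⟩ := key wγ
      ⟨1, one_mem _, by rw [one_smul]; exact rel_refl a b a⟩
    have hmem : γ'⁻¹ * γ ∈ H := by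
      rw [hH]
      have := rel_smul hact γ'⁻¹ hrel
      rwa [inv_smul_smul, ← mul_smul] at this
    have := mul_mem hγ'K (hHK ⟨γ'⁻¹ * γ, hmem⟩)
    rwa [show γ' * ((⟨γ'⁻¹ * γ, hmem⟩ : H) : Γ) = γ by
      show γ' * (γ'⁻¹ * γ) = γ; group] at this
  -- injectivity
  have hinj : Function.Injective ψ₀ := by
    rw [injective_iff_map_eq_one]
    intro k hk
    obtain ⟨d⟩ := (inferInstance : Nonempty (HNNExtension.NormalWord.TransversalPair (↥H) A B))
    set w := HNNExtension.NormalWord.equiv φ d k with hwdef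
    have hk' : w.prod φ = k := (HNNExtension.NormalWord.equiv φ d).symm_apply_apply k
    have hel1 : ψ₀ (w.prod φ) = elt τ H w.head w.toList := hψprod w.head w.toList
    have helt1 : elt τ H w.head w.toList = 1 := by rw [← hel1, hk', hk]
    rcases hl : w.toList with _ | ⟨⟨u, h₁⟩, l⟩
    · have hhead : (w.head : Γ) = 1 := by
        rw [hl, elt_nil] at helt1
        exact helt1
      have hhead' : w.head = 1 := by exact_mod_cast hhead
      rw [← hk']
      show HNNExtension.NormalWord.ReducedWord.prod φ w.toReducedWord = 1
      simp [HNNExtension.NormalWord.ReducedWord.prod, hl, hhead']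
    · exfalso
      have hch := w.chain
      rw [hl] at hch
      have hch' : List.Chain' (fun p q => Pinch a b τ p.1 (p.2 : Γ) → p.1 = q.1)
          ((u, h₁) :: l) := by
        refine List.IsChain.imp ?_ hch
        intro p q hpq hp
        apply hpq
        rcases Int.units_eq_one_or p.1 with h1 | h1 <;> rw [h1] at hp ⊢
        · rw [HNNExtension.toSubgroup_one]
          exact Subgroup.mem_subgroupOf.mpr ((hmemSg _).mpr (pinch_one.mp hp))
        · rw [HNNExtension.toSubgroup_neg_one]
          obtain ⟨σ, hσ, heq⟩ := pinch_neg.mp hp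
          refine (hmemB _).mpr ⟨σ, hσ, heq⟩
      have brit := britton_core hT hact hnoinv hab H hH hτ l u h₁ w.head hch'
      rw [hl, elt_cons] at helt1
      rcases Int.units_eq_one_or u with rfl | rfl
      · rw [if_pos rfl] at brit
        obtain ⟨s1, s2⟩ := brit
        have hx : (w.head : Γ) • τ • elt τ H h₁ l • a = a := by
          rw [smul_smul, smul_smul]
          have h1 : (w.head : Γ) * τ * elt τ H h₁ l = 1 := by
            rw [mul_assoc]
            simpa [zpow_one] using helt1
          rw [h1, one_smul]
        rw [hx] at s2
        exact sd_disjoint hT (hact _ _ _ (hact τ _ _ hab)) s2 s1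
      · rw [if_neg (by decide)] at brit
        obtain ⟨s1, s2⟩ := brit
        have hx : (w.head : Γ) • τ⁻¹ • elt τ H h₁ l • a = a := by
          rw [smul_smul, smul_smul]
          have h1 : (w.head : Γ) * τ⁻¹ * elt τ H h₁ l = 1 := by
            rw [mul_assoc]
            simpa [zpow_neg, zpow_one] using helt1
          rw [h1, one_smul]
        rw [hx] at s2
        exact sd_disjoint hT (hact _ _ _ hab.symm) s2 s1
  let ψ : HNNExtension H A B φ ≃* Γ := MulEquiv.ofBijective ψ₀ ⟨hinj, hsurj⟩
  refine ⟨H, A, B, φ, ψ, fun x => hψof x, ?_⟩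
  rw [show Subgroup.map H.subtype A = Sg0 ⊓ H from Subgroup.subgroupOf_map_subtype Sg0 H]
  rw [inf_eq_left.mpr fun g hg => hSgH g hg]
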